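/- (Morrey's inequality) Let Φ : ℝ^d → [0,∞) be an N_∞ function, A_Φ its greatest convex radial minorant, identified with the invertible increasing function Ā : [0,∞) → [0,∞) via A_Φ(x) = Ā(|x|). For every u ∈ W^1L^Φ([0,T],ℝ^d) and all s, t ∈ [0,T] with s ≠ t one has |u(t) − u(s)| ≤ |t − s| · Ā^{−1}(1/|t − s|) · ‖u'‖_{L^Φ}. -/

import Mathlib

open MeasureTheory Filter Set
open scoped ENNReal RealInnerProductSpace Topology

noncomputable section

/-- `ℝ^d` with the euclidean norm. -/
abbrev Ed (d : ℕ) : Type := EuclideanSpace ℝ (Fin d)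

/-- `Φ` is an `N_∞` function: differentiable, convex, nonnegative, vanishing exactly at `0`,
even, and superlinear at infinity. -/
def IsNInf {m : ℕ} (Φ : Ed m → ℝ) : Prop :=
  Differentiable ℝ Φ ∧ ConvexOn ℝ Set.univ Φ ∧ (∀ y, 0 ≤ Φ y) ∧ Φ 0 = 0 ∧
    (∀ y, y ≠ 0 → 0 < Φ y) ∧ (∀ y, Φ (-y) = Φ y) ∧
    Tendsto (fun y => Φ y / ‖y‖) (comap (fun y : Ed m => ‖y‖) atTop) atTop

variable {d : ℕ}

/-- The modular `ρ_Φ(u) = ∫_0^T Φ(u(t)) dt`, as an extended nonnegative real. -/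
def rhoE (T : ℝ) (Φ : Ed d → ℝ) (u : ℝ → Ed d) : ℝ≥0∞ :=
  ∫⁻ t in Icc (0:ℝ) T, ENNReal.ofReal (Φ (u t))

/-- `u ∈ L^Φ([0,T], ℝ^d)`. -/
def MemLphi (T : ℝ) (Φ : Ed d → ℝ) (u : ℝ → Ed d) : Prop :=
  AEMeasurable u (volume.restrict (Icc (0:ℝ) T)) ∧
    ∃ l : ℝ, 0 < l ∧ rhoE T Φ (fun t => l • u t) < ⊤

/-- The Luxemburg norm of `u` on `[0,T]`. -/
def luxNorm (T : ℝ) (Φ : Ed d → ℝ) (u : ℝ → Ed d) : ℝ :=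
  sInf {l : ℝ | 0 < l ∧ rhoE T Φ (fun t => l⁻¹ • u t) ≤ 1}

/-- `u ∈ W^1L^Φ([0,T], ℝ^d)` with a.e. derivative `u'` : `u` is absolutely continuous,
being the integral of the (integrable) function `u'`, and `u' ∈ L^Φ`. -/
def MemW1Lphi (T : ℝ) (Φ : Ed d → ℝ) (u u' : ℝ → Ed d) : Prop :=
  IntegrableOn u' (Icc (0:ℝ) T) ∧ MemLphi T Φ u' ∧
    ∀ t ∈ Icc (0:ℝ) T, u t = u 0 + ∫ s in (0:ℝ)..t, u' s

/-- `Ψ` is a convex, nonnegative, radial minorant of `Φ`. -/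
def RadialConvexMinorant (Φ Ψ : Ed d → ℝ) : Prop :=
  ConvexOn ℝ Set.univ Ψ ∧ (∀ x, 0 ≤ Ψ x) ∧ (∀ x y, ‖x‖ = ‖y‖ → Ψ x = Ψ y) ∧ ∀ x, Ψ x ≤ Φ x

/-- `A_Φ`, the greatest convex radial minorant of `Φ`. -/
def APhi (Φ : Ed d → ℝ) (x : Ed d) : ℝ :=
  sSup {r : ℝ | ∃ Ψ, RadialConvexMinorant Φ Ψ ∧ r = Ψ x}

section AuxAPhi

variable {Φ : Ed d → ℝ}

lemma zero_minorant (hnn : ∀ y, 0 ≤ Φ y) : RadialConvexMinorant Φ (fun _ => 0) :=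
  ⟨convexOn_const 0 convex_univ, fun _ => le_rfl, fun _ _ _ => rfl, hnn⟩

lemma aphi_bdd (x : Ed d) : BddAbove {r : ℝ | ∃ Ψ, RadialConvexMinorant Φ Ψ ∧ r = Ψ x} :=
  ⟨Φ x, by rintro r ⟨Ψ, hΨ, rfl⟩; exact hΨ.2.2.2 x⟩

lemma APhi_nonneg (hnn : ∀ y, 0 ≤ Φ y) (x : Ed d) : 0 ≤ APhi Φ x :=
  le_csSup (aphi_bdd x) ⟨_, zero_minorant hnn, rfl⟩

lemma minorant_le_APhi {Ψ : Ed d → ℝ} (hΨ : RadialConvexMinorant Φ Ψ) (x : Ed d) :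
    Ψ x ≤ APhi Φ x := le_csSup (aphi_bdd x) ⟨Ψ, hΨ, rfl⟩

lemma APhi_le {x : Ed d} {a : ℝ} (ha : 0 ≤ a)
    (hb : ∀ Ψ, RadialConvexMinorant Φ Ψ → Ψ x ≤ a) : APhi Φ x ≤ a := by
  refine Real.sSup_le ?_ ha
  rintro r ⟨Ψ, hΨ, rfl⟩
  exact hb Ψ hΨ

lemma convex_smul_le {f : Ed d → ℝ} (hf : ConvexOn ℝ Set.univ f) (hf0 : f 0 = 0)
    {c : ℝ} (h0 : 0 ≤ c) (h1 : c ≤ 1) (y : Ed d) : f (c • y) ≤ c * f y := by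
  have := hf.2 (Set.mem_univ y) (Set.mem_univ (0 : Ed d)) h0 (sub_nonneg.mpr h1) (by ring)
  simpa [hf0, smul_zero] using this

lemma APhi_zero (hnn : ∀ y, 0 ≤ Φ y) (h0 : Φ 0 = 0) : APhi Φ 0 = 0 := by
  refine le_antisymm (APhi_le le_rfl fun Ψ hΨ => (hΨ.2.2.2 0).trans h0.le) (APhi_nonneg hnn 0)

lemma APhi_smul_le (hnn : ∀ y, 0 ≤ Φ y) (h0 : Φ 0 = 0) {θ : ℝ} (hθ0 : 0 ≤ θ) (hθ1 : θ ≤ 1)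
    (w : Ed d) : APhi Φ (θ • w) ≤ θ * APhi Φ w := by
  refine APhi_le (mul_nonneg hθ0 (APhi_nonneg hnn w)) fun Ψ hΨ => ?_
  have hΨ0 : Ψ 0 = 0 := le_antisymm ((hΨ.2.2.2 0).trans h0.le) (hΨ.2.1 0)
  calc Ψ (θ • w) ≤ θ * Ψ w := convex_smul_le hΨ.1 hΨ0 hθ0 hθ1 w
    _ ≤ θ * APhi Φ w := mul_le_mul_of_nonneg_left (minorant_le_APhi hΨ w) hθ0

end AuxAPhi

lemma morrey_key {d : ℕ} (T : ℝ) (hT : 0 < T) (Φ : Ed d → ℝ) (hΦ : IsNInf Φ)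
    (Abar AbarInv : ℝ → ℝ)
    (hAbar : ∀ x : Ed d, Abar ‖x‖ = APhi Φ x)
    (hAbarInv : ∀ r ∈ Ici (0:ℝ), AbarInv r ∈ Ici (0:ℝ) ∧ Abar (AbarInv r) = r)
    (u u' : ℝ → Ed d) (hu : MemW1Lphi T Φ u u')
    (s t : ℝ) (hs : s ∈ Icc (0:ℝ) T) (ht : t ∈ Icc (0:ℝ) T) (hlt : s < t) :
    ‖u t - u s‖ ≤ |t - s| * AbarInv (1 / |t - s|) * luxNorm T Φ u' := by
  obtain ⟨hΦdiff, hΦconv, hΦnn, hΦ0, hΦpos, hΦeven, hΦsup⟩ := hΦ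
  have hh : 0 < t - s := sub_pos.mpr hlt
  rw [abs_of_pos hh, one_div]
  set h : ℝ := t - s with hhdef
  set S : Set ℝ := {l : ℝ | 0 < l ∧ rhoE T Φ (fun x => l⁻¹ • u' x) ≤ 1} with hSdef
  have hlux : luxNorm T Φ u' = sInf S := rfl
  -- S is nonempty
  obtain ⟨hmeas, l₀, hl₀, hfin⟩ := hu.2.1
  have hSne : S.Nonempty := by
    set k : ℝ := (rhoE T Φ (fun x => l₀ • u' x)).toReal + 1 with hk
    have hk1 : 1 ≤ k := le_add_of_nonneg_left ENNReal.toReal_nonneg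
    have hk0 : 0 < k := lt_of_lt_of_le one_pos hk1
    refine ⟨k / l₀, div_pos hk0 hl₀, ?_⟩
    have heq : ∀ x : ℝ, (k / l₀)⁻¹ • u' x = k⁻¹ • (l₀ • u' x) := by
      intro x; rw [smul_smul]; congr 1; field_simp
    calc rhoE T Φ (fun x => (k / l₀)⁻¹ • u' x)
        = ∫⁻ x in Icc (0:ℝ) T, ENNReal.ofReal (Φ (k⁻¹ • (l₀ • u' x))) := by
          unfold rhoE; simp_rw [heq]
      _ ≤ ∫⁻ x in Icc (0:ℝ) T, ENNReal.ofReal k⁻¹ * ENNReal.ofReal (Φ (l₀ • u' x)) := by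
          refine lintegral_mono fun x => ?_
          rw [← ENNReal.ofReal_mul (inv_nonneg.mpr hk0.le)]
          exact ENNReal.ofReal_le_ofReal
            (convex_smul_le hΦconv hΦ0 (inv_nonneg.mpr hk0.le) (inv_le_one_of_one_le₀ hk1) _)
      _ = ENNReal.ofReal k⁻¹ * rhoE T Φ (fun x => l₀ • u' x) := by
          rw [lintegral_const_mul' _ _ ENNReal.ofReal_ne_top]; rfl
      _ ≤ 1 := by
          rw [← ENNReal.ofReal_toReal hfin.ne, ← ENNReal.ofReal_mul (inv_nonneg.mpr hk0.le)]
          refine ENNReal.ofReal_le_one.mpr ?_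
          rw [inv_mul_le_iff₀ hk0, mul_one, hk]
          linarith
  -- the measure on (s, t]
  have hIoc_sub : Ioc s t ⊆ Icc (0:ℝ) T := fun x hx => ⟨hs.1.trans hx.1.le, hx.2.trans ht.2⟩
  set μ : Measure ℝ := volume.restrict (Ioc s t) with hμ
  have hμuniv : μ Set.univ = ENNReal.ofReal h := by
    rw [hμ, Measure.restrict_apply_univ, Real.volume_Ioc]
  haveI : IsFiniteMeasure μ := ⟨by rw [hμuniv]; exact ENNReal.ofReal_lt_top⟩
  haveI : NeZero μ :=
    ⟨Measure.measure_univ_ne_zero.mp (by rw [hμuniv]; exact (ENNReal.ofReal_pos.mpr hh).ne')⟩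
  have htoReal : (μ Set.univ).toReal = h := by rw [hμuniv, ENNReal.toReal_ofReal hh.le]
  have hu'Ioc : IntegrableOn u' (Ioc s t) := hu.1.mono_set hIoc_sub
  have hΔ : u t - u s = ∫ a, u' a ∂μ := by
    have hti : IntervalIntegrable u' volume 0 t :=
      (intervalIntegrable_iff_integrableOn_Ioc_of_le ht.1).mpr
        (hu.1.mono_set (Ioc_subset_Icc_self.trans (Icc_subset_Icc le_rfl ht.2)))
    have hsi : IntervalIntegrable u' volume 0 s :=
      (intervalIntegrable_iff_integrableOn_Ioc_of_le hs.1).mpr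
        (hu.1.mono_set (Ioc_subset_Icc_self.trans (Icc_subset_Icc le_rfl hs.2)))
    have : ∫ a, u' a ∂μ = ∫ x in s..t, u' x := by
      rw [hμ, intervalIntegral.integral_of_le hlt.le]
    rw [this, hu.2.2 t ht, hu.2.2 s hs,
      ← intervalIntegral.integral_interval_sub_left hti hsi]
    abel
  -- the core bound for each admissible l
  have hinv_nn : (0:ℝ) ≤ h⁻¹ := inv_nonneg.mpr hh.le
  obtain ⟨hy0, hAy⟩ := hAbarInv h⁻¹ hinv_nn
  have key : ∀ l ∈ S, ‖u t - u s‖ ≤ h * AbarInv h⁻¹ * l := by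
    rintro l ⟨hl, hρ⟩
    set v : ℝ → Ed d := fun x => l⁻¹ • u' x with hv
    have hv_int : Integrable v μ := by
      rw [hμ, hv]; exact hu'Ioc.smul l⁻¹
    set w : Ed d := ⨍ x, v x ∂μ with hw
    have hL : (∫⁻ a, ENNReal.ofReal (Φ (v a)) ∂μ) ≤ 1 := by
      rw [hμ]
      exact le_trans (lintegral_mono_set hIoc_sub) hρ
    have hΦv_meas : AEStronglyMeasurable (fun a => Φ (v a)) μ :=
      hΦdiff.continuous.comp_aestronglyMeasurable hv_int.aestronglyMeasurable
    have hΦv_int : Integrable (fun a => Φ (v a)) μ := by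
      refine ⟨hΦv_meas, ?_⟩
      have heq : ∀ a : ℝ, (‖Φ (v a)‖₊ : ℝ≥0∞) = ENNReal.ofReal (Φ (v a)) := fun a =>
        Real.enorm_eq_ofReal (hΦnn _)
      show (∫⁻ a, (‖Φ (v a)‖₊ : ℝ≥0∞) ∂μ) < ⊤
      calc (∫⁻ a, (‖Φ (v a)‖₊ : ℝ≥0∞) ∂μ) = ∫⁻ a, ENNReal.ofReal (Φ (v a)) ∂μ :=
            lintegral_congr heq
        _ ≤ 1 := hL
        _ < ⊤ := ENNReal.one_lt_top
    have hintR : ∫ a, Φ (v a) ∂μ ≤ 1 := by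
      rw [integral_eq_lintegral_of_nonneg_ae (Eventually.of_forall fun a => hΦnn _) hΦv_meas]
      exact ENNReal.toReal_le_of_le_ofReal zero_le_one (by simpa using hL)
    have havg : ⨍ a, Φ (v a) ∂μ ≤ h⁻¹ := by
      rw [average_eq, measureReal_def, htoReal, smul_eq_mul]
      calc h⁻¹ * ∫ a, Φ (v a) ∂μ ≤ h⁻¹ * 1 := mul_le_mul_of_nonneg_left hintR hinv_nn
        _ = h⁻¹ := mul_one _
    have hAw : APhi Φ w ≤ h⁻¹ := by
      refine APhi_le hinv_nn fun Ψ hΨ => ?_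
      have hΨcont : Continuous Ψ :=
        continuousOn_univ.mp (hΨ.1.continuousOn isOpen_univ)
      have hΨv_int : Integrable (fun a => Ψ (v a)) μ :=
        hΦv_int.mono' (hΨcont.comp_aestronglyMeasurable hv_int.aestronglyMeasurable)
          (Eventually.of_forall fun a => by
            rw [Real.norm_eq_abs, abs_of_nonneg (hΨ.2.1 _)]; exact hΨ.2.2.2 _)
      have hjen : Ψ w ≤ ⨍ a, Ψ (v a) ∂μ := by
        rw [hw]
        exact hΨ.1.map_average_le (hΨ.1.continuousOn isOpen_univ) isClosed_univ
          (Eventually.of_forall fun _ => Set.mem_univ _) hv_int hΨv_int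
      have hmono : ⨍ a, Ψ (v a) ∂μ ≤ ⨍ a, Φ (v a) ∂μ := by
        rw [average_eq, average_eq]
        exact smul_le_smul_of_nonneg_left
          (integral_mono hΨv_int hΦv_int fun a => hΨ.2.2.2 _) (by positivity)
      exact hjen.trans (hmono.trans havg)
    have hwle : ‖w‖ ≤ AbarInv h⁻¹ := by
      by_contra hcon
      push_neg at hcon
      have hwpos : 0 < ‖w‖ := lt_of_le_of_lt hy0 hcon
      set θ : ℝ := AbarInv h⁻¹ / ‖w‖ with hθ
      have hθ0 : 0 ≤ θ := div_nonneg hy0 hwpos.le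
      have hθ1 : θ < 1 := (div_lt_one hwpos).mpr hcon
      have hn : ‖θ • w‖ = AbarInv h⁻¹ := by
        rw [norm_smul, Real.norm_eq_abs, abs_of_nonneg hθ0, hθ, div_mul_cancel₀ _ hwpos.ne']
      have e1 : h⁻¹ = APhi Φ (θ • w) := by rw [← hAy, ← hAbar (θ • w), hn]
      have e2 : APhi Φ (θ • w) ≤ θ * APhi Φ w := APhi_smul_le hΦnn hΦ0 hθ0 hθ1.le w
      have e3 : θ * APhi Φ w ≤ θ * h⁻¹ := mul_le_mul_of_nonneg_left hAw hθ0
      have e4 : θ * h⁻¹ < 1 * h⁻¹ := mul_lt_mul_of_pos_right hθ1 (inv_pos.mpr hh)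
      rw [one_mul] at e4
      linarith
    have hInt : ∫ a, u' a ∂μ = l • (h • w) := by
      have h1 : ∫ a, v a ∂μ = l⁻¹ • ∫ a, u' a ∂μ := by
        rw [hv]; exact integral_smul l⁻¹ u'
      have h2 : h • w = ∫ a, v a ∂μ := by
        rw [hw, average_eq, measureReal_def, htoReal, smul_smul, mul_inv_cancel₀ hh.ne', one_smul]
      rw [h2, h1, smul_smul, mul_inv_cancel₀ hl.ne', one_smul]
    have hnorm : ‖u t - u s‖ = l * (h * ‖w‖) := by
      rw [hΔ, hInt, norm_smul, norm_smul, Real.norm_eq_abs, Real.norm_eq_abs,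
        abs_of_pos hl, abs_of_pos hh]
    rw [hnorm]
    calc l * (h * ‖w‖) ≤ l * (h * AbarInv h⁻¹) :=
          mul_le_mul_of_nonneg_left (mul_le_mul_of_nonneg_left hwle hh.le) hl.le
      _ = h * AbarInv h⁻¹ * l := by ring
  -- AbarInv h⁻¹ is positive
  have hypos : 0 < AbarInv h⁻¹ := by
    rcases lt_or_eq_of_le (mem_Ici.mp hy0) with hp | hp
    · exact hp
    · exfalso
      have hz : Abar 0 = 0 := by
        simpa [norm_zero, APhi_zero hΦnn hΦ0] using hAbar (0 : Ed d)
      have : h⁻¹ = 0 := by rw [← hAy, ← hp, hz]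
      exact (inv_pos.mpr hh).ne' this
  have hC : 0 < h * AbarInv h⁻¹ := mul_pos hh hypos
  have hsinf : ‖u t - u s‖ / (h * AbarInv h⁻¹) ≤ sInf S :=
    le_csInf hSne fun l hl => (div_le_iff₀ hC).mpr (by rw [mul_comm]; exact key l hl)
  have hfin2 : ‖u t - u s‖ ≤ sInf S * (h * AbarInv h⁻¹) := (div_le_iff₀ hC).mp hsinf
  rw [hlux]
  calc ‖u t - u s‖ ≤ sInf S * (h * AbarInv h⁻¹) := hfin2
    _ = h * AbarInv h⁻¹ * sInf S := by ring


/-- **Morrey's inequality.** If `Ā : [0,∞) → [0,∞)` realizes the radial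
function `A_Φ` (i.e. `Ā(‖x‖) = A_Φ(x)`) and `Ā⁻¹` is its inverse on `[0,∞)`, then for
`u ∈ W^1L^Φ` and `s ≠ t` in `[0,T]`:
`|u(t) − u(s)| ≤ |t − s| ⬝ Ā⁻¹(1/|t−s|) ⬝ ‖u'‖_{L^Φ}`. -/
theorem statement2 {d : ℕ} (T : ℝ) (hT : 0 < T) (Φ : Ed d → ℝ) (hΦ : IsNInf Φ)
    (Abar AbarInv : ℝ → ℝ)
    (hAbar : ∀ x : Ed d, Abar ‖x‖ = APhi Φ x)
    (hAbarInv : ∀ r ∈ Ici (0:ℝ), AbarInv r ∈ Ici (0:ℝ) ∧ Abar (AbarInv r) = r)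
    (u u' : ℝ → Ed d) (hu : MemW1Lphi T Φ u u')
    (s t : ℝ) (hs : s ∈ Icc (0:ℝ) T) (ht : t ∈ Icc (0:ℝ) T) (hst : s ≠ t) :
    ‖u t - u s‖ ≤ |t - s| * AbarInv (1 / |t - s|) * luxNorm T Φ u' := by
  rcases lt_or_gt_of_ne hst with hlt | hlt
  · exact morrey_key T hT Φ hΦ Abar AbarInv hAbar hAbarInv u u' hu s t hs ht hlt
  · have := morrey_key T hT Φ hΦ Abar AbarInv hAbar hAbarInv u u' hu t s ht hs hlt
    rwa [norm_sub_rev, abs_sub_comm] at this
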